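/- The barycenter of the cusp triangle T' coincides with the center of area of Steiner's Hat: (P₁' + P₂' + P₃')/3 = C̄ = (−(a²+b²) cos u/(2a), −(a²+b²) sin u/(2b)). -/

import Mathlib

open Real

noncomputable def steinerHat (a b u t : ℝ) : ℝ × ℝ :=
  (((a ^ 2 - b ^ 2) * (1 + cos (t + u)) * cos t - a ^ 2 * cos u) / a,
   ((a ^ 2 - b ^ 2) * cos t * sin (t + u) - (a ^ 2 - b ^ 2) * sin t - a ^ 2 * sin u) / b)

/-- the barycenter of the cusp triangle `T'` coincides with the center of area
`C̄` of Steiner's Hat. -/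
theorem stmt8 (a b u : ℝ) (hb : 0 < b) (hab : b < a)
    (P₁' P₂' P₃' : ℝ × ℝ)
    (hP₁' : P₁' = steinerHat a b u (-u / 3))
    (hP₂' : P₂' = steinerHat a b u (-u / 3 - 2 * π / 3))
    (hP₃' : P₃' = steinerHat a b u (-u / 3 - 4 * π / 3)) :
    ((P₁'.1 + P₂'.1 + P₃'.1) / 3, (P₁'.2 + P₂'.2 + P₃'.2) / 3)
      = (-((a ^ 2 + b ^ 2) * cos u) / (2 * a), -((a ^ 2 + b ^ 2) * sin u) / (2 * b)) := by
  subst hP₁' hP₂' hP₃'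
  have ha : (a : ℝ) ≠ 0 := (hb.trans hab).ne'
  have hb' : (b : ℝ) ≠ 0 := hb.ne'
  set c := cos (u/3) with hc
  set s := sin (u/3) with hs
  set r := Real.sqrt 3 with hrdef
  have hr : r ^ 2 = 3 := Real.sq_sqrt (by norm_num)
  have hp : s ^ 2 + c ^ 2 = 1 := sin_sq_add_cos_sq (u/3)
  -- basic special values
  have c23 : cos (2*π/3) = -(1/2) := by
    rw [show (2*π/3 : ℝ) = π - π/3 by ring, cos_pi_sub, cos_pi_div_three]; try ring
  have s23 : sin (2*π/3) = r/2 := by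
    rw [show (2*π/3 : ℝ) = π - π/3 by ring, sin_pi_sub, sin_pi_div_three]; try ring
  have c43 : cos (4*π/3) = -(1/2) := by
    rw [show (4*π/3 : ℝ) = π + π/3 by ring, cos_add, cos_pi, sin_pi, cos_pi_div_three]; try ring
  have s43 : sin (4*π/3) = -(r/2) := by
    rw [show (4*π/3 : ℝ) = π + π/3 by ring, sin_add, cos_pi, sin_pi, sin_pi_div_three]; try ring
  -- the twelve trig values
  have h1 : cos (-u/3) = c := by rw [show (-u/3 : ℝ) = -(u/3) by ring, cos_neg]
  have h2 : sin (-u/3) = -s := by rw [show (-u/3 : ℝ) = -(u/3) by ring, sin_neg]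
  have h3 : cos (-u/3 + u) = 2*c^2 - 1 := by
    rw [show (-u/3 + u : ℝ) = 2*(u/3) by ring, cos_two_mul]
  have h4 : sin (-u/3 + u) = 2*s*c := by
    rw [show (-u/3 + u : ℝ) = 2*(u/3) by ring, sin_two_mul]; try ring
  have h5 : cos (-u/3 - 2*π/3) = -c/2 - s*r/2 := by
    rw [show (-u/3 - 2*π/3 : ℝ) = -(u/3 + 2*π/3) by ring, cos_neg, cos_add, c23, s23]; ring
  have h6 : sin (-u/3 - 2*π/3) = s/2 - c*r/2 := by
    rw [show (-u/3 - 2*π/3 : ℝ) = -(u/3 + 2*π/3) by ring, sin_neg, sin_add, c23, s23]; ring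
  have h7 : cos (-u/3 - 2*π/3 + u) = -(2*c^2-1)/2 + (2*s*c)*r/2 := by
    rw [show (-u/3 - 2*π/3 + u : ℝ) = 2*(u/3) - 2*π/3 by ring, cos_sub, c23, s23,
      cos_two_mul, sin_two_mul]; ring
  have h8 : sin (-u/3 - 2*π/3 + u) = -(2*s*c)/2 - (2*c^2-1)*r/2 := by
    rw [show (-u/3 - 2*π/3 + u : ℝ) = 2*(u/3) - 2*π/3 by ring, sin_sub, c23, s23,
      cos_two_mul, sin_two_mul]; ring
  have h9 : cos (-u/3 - 4*π/3) = -c/2 + s*r/2 := by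
    rw [show (-u/3 - 4*π/3 : ℝ) = -(u/3 + 4*π/3) by ring, cos_neg, cos_add, c43, s43]; ring
  have h10 : sin (-u/3 - 4*π/3) = s/2 + c*r/2 := by
    rw [show (-u/3 - 4*π/3 : ℝ) = -(u/3 + 4*π/3) by ring, sin_neg, sin_add, c43, s43]; ring
  have h11 : cos (-u/3 - 4*π/3 + u) = -(2*c^2-1)/2 - (2*s*c)*r/2 := by
    rw [show (-u/3 - 4*π/3 + u : ℝ) = 2*(u/3) - 4*π/3 by ring, cos_sub, c43, s43,
      cos_two_mul, sin_two_mul]; ring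
  have h12 : sin (-u/3 - 4*π/3 + u) = -(2*s*c)/2 + (2*c^2-1)*r/2 := by
    rw [show (-u/3 - 4*π/3 + u : ℝ) = 2*(u/3) - 4*π/3 by ring, sin_sub, c43, s43,
      cos_two_mul, sin_two_mul]; ring
  have hcu : cos u = 4*c^3 - 3*c := by
    rw [show (u : ℝ) = 3*(u/3) by ring, cos_three_mul]
  have hsu : sin u = 3*s - 4*s^3 := by
    rw [show (u : ℝ) = 3*(u/3) by ring, sin_three_mul]
  simp only [steinerHat, Prod.mk.injEq]
  constructor
  · rw [h1, h3, h5, h7, h9, h11, hcu]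
    field_simp
    ring_nf
    linear_combination (-4*(a^2-b^2)*c*s^2) * hr + (-12*(a^2-b^2)*c) * hp
  · rw [h1, h2, h4, h5, h6, h8, h9, h10, h12, hsu]
    field_simp
    ring_nf
    linear_combination (2*s*(a^2 - b^2)*(2*c^2-1)) * hr + (24*s*(a^2 - b^2)) * hp
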